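/- Let G be a finite chordal graph. Then there exists an acyclic matching V on the independence complex I(G) such that every V-critical simplex, except possibly one 0-dimensional simplex, is a maximal simplex of I(G). -/

import Mathlib

open Finset

/-- A (nonempty-face) abstract simplicial complex on vertex set `V`:
faces are nonempty finite sets, closed under nonempty subsets. -/
def IsComplex {V : Type*} (X : Set (Finset V)) : Prop :=
  (∀ s ∈ X, s.Nonempty) ∧ ∀ ⦃s t : Finset V⦄, s ∈ X → t ⊆ s → t.Nonempty → t ∈ X

/-- Nonempty independent sets of `G` avoiding the vertex set `U`;
this is the set of simplices of the independence complex `I(G − U)`. -/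
def avoidIndep {V : Type*} (G : SimpleGraph V) (U : Set V) : Set (Finset V) :=
  {s | s.Nonempty ∧ (∀ x ∈ s, x ∉ U) ∧ ∀ x ∈ s, ∀ y ∈ s, ¬ G.Adj x y}

/-- The independence complex of `G` (set of nonempty simplices). -/
def indepComplex {V : Type*} (G : SimpleGraph V) : Set (Finset V) :=
  avoidIndep G ∅

/-- A matching on the Hasse diagram of a simplicial complex `X`. -/
structure IsMatching {V : Type*} (X : Set (Finset V)) (M : Set (Finset V × Finset V)) : Prop where
  left_mem : ∀ p ∈ M, p.1 ∈ X
  right_mem : ∀ p ∈ M, p.2 ∈ X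
  subset : ∀ p ∈ M, p.1 ⊆ p.2
  card_eq : ∀ p ∈ M, p.2.card = p.1.card + 1
  eq_of_shared : ∀ p ∈ M, ∀ q ∈ M,
    p.1 = q.1 ∨ p.1 = q.2 ∨ p.2 = q.1 ∨ p.2 = q.2 → p = q

/-- One step of the modified Hasse diagram: matched edges are reversed (point upwards),
all other Hasse edges point from a simplex to its codimension-1 faces. -/
def matchStep {V : Type*} (X : Set (Finset V)) (M : Set (Finset V × Finset V))
    (σ τ : Finset V) : Prop :=
  σ ∈ X ∧ τ ∈ X ∧
    ((σ, τ) ∈ M ∨ (τ ⊆ σ ∧ σ.card = τ.card + 1 ∧ (τ, σ) ∉ M))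

/-- An acyclic matching: reversing matched edges leaves the Hasse diagram acyclic. -/
def IsAcyclicMatching {V : Type*} (X : Set (Finset V)) (M : Set (Finset V × Finset V)) : Prop :=
  IsMatching X M ∧ ∀ σ, ¬ Relation.TransGen (matchStep X M) σ σ

/-- A critical (unmatched) simplex. -/
def IsCritical {V : Type*} (X : Set (Finset V)) (M : Set (Finset V × Finset V))
    (σ : Finset V) : Prop :=
  σ ∈ X ∧ ∀ p ∈ M, p.1 ≠ σ ∧ p.2 ≠ σ

/-- The number of `d`-dimensional critical simplices. -/
noncomputable def critCount {V : Type*} (X : Set (Finset V)) (M : Set (Finset V × Finset V))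
    (d : ℕ) : ℕ :=
  {σ | IsCritical X M σ ∧ σ.card = d + 1}.ncard

/-- A complex is collapsible if it admits an acyclic matching with a unique critical simplex. -/
def Collapsible {V : Type*} (X : Set (Finset V)) : Prop :=
  ∃ M, IsAcyclicMatching X M ∧ ∃! σ, IsCritical X M σ

/-- A maximal face of a complex. -/
def IsMaximalFace {V : Type*} (X : Set (Finset V)) (σ : Finset V) : Prop :=
  σ ∈ X ∧ ∀ τ ∈ X, σ ⊆ τ → σ = τ

/-- All critical simplices of the matching are maximal faces,
except possibly a single critical 0-simplex. -/
def ExceptOneMaximal {V : Type*} (X : Set (Finset V)) (M : Set (Finset V × Finset V)) : Prop :=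
  (∀ σ, IsCritical X M σ → ¬ IsMaximalFace X σ → σ.card = 1) ∧
  (∀ σ τ, IsCritical X M σ → IsCritical X M τ →
    ¬ IsMaximalFace X σ → ¬ IsMaximalFace X τ → σ = τ)

/-- The geometric realization of a complex, as a subspace of `V → ℝ`. -/
def realizationSet {V : Type*} (X : Set (Finset V)) : Set (V → ℝ) :=
  {f | (∀ v, 0 ≤ f v) ∧ ∃ s ∈ X, (∀ v, f v ≠ 0 ↔ v ∈ s) ∧ ∑ v ∈ s, f v = 1}

/-- The base point of the `d`-dimensional unit sphere. -/
noncomputable def spherePt (d : ℕ) : Metric.sphere (0 : EuclideanSpace ℝ (Fin (d+1))) 1 :=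
  ⟨EuclideanSpace.single 0 1, by simp⟩

/-- Identify all base points of the given spheres with a single external point. -/
noncomputable def WedgeRel (c : ℕ → ℕ) :
    (Unit ⊕ Σ d : ℕ, Fin (c d) × Metric.sphere (0 : EuclideanSpace ℝ (Fin (d+1))) 1) →
    (Unit ⊕ Σ d : ℕ, Fin (c d) × Metric.sphere (0 : EuclideanSpace ℝ (Fin (d+1))) 1) → Prop :=
  fun x y => ∃ d i, x = Sum.inr ⟨d, i, spherePt d⟩ ∧ y = Sum.inl ()

/-- The wedge of spheres with `c d` spheres of dimension `d` (a point if all `c d = 0`). -/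
noncomputable def WedgeOfSpheres (c : ℕ → ℕ) : Type :=
  Quot (WedgeRel c)

noncomputable instance (c : ℕ → ℕ) : TopologicalSpace (WedgeOfSpheres c) :=
  instTopologicalSpaceQuot

/-- A universal vertex: adjacent to every other vertex. -/
def IsUniversal {V : Type*} (G : SimpleGraph V) (u : V) : Prop :=
  ∀ w, w ≠ u → G.Adj u w

/-- A chordal graph: no induced cycle of length at least 4. -/
def Chordal {W : Type*} (H : SimpleGraph W) : Prop :=
  ¬ ∃ n, 4 ≤ n ∧ ∃ f : ZMod n → W, Function.Injective f ∧
    ∀ i j, H.Adj (f i) (f j) ↔ (j = i + 1 ∨ i = j + 1)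

/-- The domination number of a graph. -/
noncomputable def dominationNumber {V : Type*} (G : SimpleGraph V) : ℕ :=
  sInf {n | ∃ S : Finset V, S.card = n ∧ ∀ w, w ∉ S → ∃ x ∈ S, G.Adj x w}

/-- `G` belongs to the family `𝒢 m n`: the blocks are the fibres of `P`
(all nonempty, i.e. `P` surjective), and two distinct vertices are adjacent
iff their block indices are comparable in the product order. -/
def GridGraph {V : Type*} (m n : ℕ) (G : SimpleGraph V)
    (P : V → Fin (m+1) × Fin (n+1)) : Prop :=
  Function.Surjective P ∧ ∀ x y, G.Adj x y ↔ x ≠ y ∧ (P x ≤ P y ∨ P y ≤ P x)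

/-- The closed neighbourhood `N_G[v]`. -/
def closedNbhd {V : Type*} (G : SimpleGraph V) (v : V) : Set V :=
  insert v (G.neighborSet v)

/-- Independent sets of `G` (including `∅`) avoiding the vertex set `U`;
the full set of simplices (with the empty simplex) of `I(G − U)`. -/
def avoidIndepE {V : Type*} (G : SimpleGraph V) (U : Set V) : Set (Finset V) :=
  {s | (∀ x ∈ s, x ∉ U) ∧ ∀ x ∈ s, ∀ y ∈ s, ¬ G.Adj x y}

/-- The independence complex of `G`, including the empty simplex. -/
def indepComplexE {V : Type*} (G : SimpleGraph V) : Set (Finset V) :=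
  avoidIndepE G ∅
section cyc
variable {V : Type*} (G : SimpleGraph V)

lemma zmod_succ_val {n : ℕ} (hn : 4 ≤ n) (i j : ZMod n) :
    haveI : NeZero n := ⟨by omega⟩
    (j = i + 1 ↔ (j.val = i.val + 1 ∨ (i.val = n - 1 ∧ j.val = 0))) := by
  haveI : NeZero n := ⟨by omega⟩
  haveI : Fact (1 < n) := ⟨by omega⟩
  have hv1 : (1 : ZMod n).val = 1 := ZMod.val_one n
  have hadd : (i + 1).val = (i.val + 1) % n := by
    rw [ZMod.val_add, hv1]
  have hlt : i.val < n := ZMod.val_lt i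
  have hjlt : j.val < n := ZMod.val_lt j
  have hmod : (i.val + 1) % n = if i.val = n - 1 then 0 else i.val + 1 := by
    split
    · next h => rw [h, Nat.sub_add_cancel (by omega), Nat.mod_self]
    · next h => exact Nat.mod_eq_of_lt (by omega)
  constructor
  · rintro rfl
    rw [hadd, hmod]
    split
    · next h => right; exact ⟨h, rfl⟩
    · next h => left; rfl
  · intro h
    have : j.val = (i + 1).val := by
      rw [hadd, hmod]
      split
      · next hh => omega
      · next hh => omega
    exact ZMod.val_injective n this

lemma not_chordal_of_cycleFun (n : ℕ) (g : ℕ → V) (h4 : 4 ≤ n)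
    (hinj : ∀ i j, i < j → j < n → g i ≠ g j)
    (hadj : ∀ i j, i < j → j < n →
      (G.Adj (g i) (g j) ↔ (j = i + 1 ∨ (i = 0 ∧ j = n - 1)))) : ¬ Chordal G := by
  intro hc
  apply hc
  haveI : NeZero n := ⟨by omega⟩
  refine ⟨n, h4, fun i => g i.val, ?_, ?_⟩
  · intro i j h
    rcases lt_trichotomy i.val j.val with hv | hv | hv
    · exact absurd h (hinj _ _ hv (ZMod.val_lt j))
    · exact ZMod.val_injective n hv
    · exact absurd h.symm (hinj _ _ hv (ZMod.val_lt i))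
  · intro i j
    rw [zmod_succ_val h4 i j, zmod_succ_val h4 j i]
    have h1 := ZMod.val_lt i
    have h2 := ZMod.val_lt j
    rcases lt_trichotomy i.val j.val with hv | hv | hv
    · rw [hadj _ _ hv h2]
      omega
    · have : i = j := ZMod.val_injective n hv
      subst this
      constructor
      · intro hh; exact (G.irrefl hh).elim
      · intro hh; exfalso; omega
    · rw [G.adj_comm, hadj _ _ hv h1]
      omega

end cyc
section path
variable {V : Type*} (G : SimpleGraph V)

/-- Paths from `x` to `y` whose interior vertices lie in `A`. -/
def PathSet (x y : V) (A : Set V) : Set (List V) :=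
  {l | l.Chain' G.Adj ∧ 2 ≤ l.length ∧ l.head? = some x ∧ l.getLast? = some y ∧
    ∀ z ∈ l, z = x ∨ z = y ∨ z ∈ A}

variable {G} {x y : V} {A : Set V}

lemma pathLen {l : List V} (hl : l ∈ PathSet G x y A) : 2 ≤ l.length := hl.2.1

lemma pathFirst {l : List V} (hl : l ∈ PathSet G x y A) :
    l[0]'(by have := pathLen hl; omega) = x := by
  have h := hl.2.2.1
  rw [List.head?_eq_getElem?, List.getElem?_eq_getElem (by have := pathLen hl; omega)] at h
  exact Option.some_injective _ h

lemma pathLast {l : List V} (hl : l ∈ PathSet G x y A) :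
    l[l.length - 1]'(by have := pathLen hl; omega) = y := by
  have h := hl.2.2.2.1
  rw [List.getLast?_eq_getElem?, List.getElem?_eq_getElem (by have := pathLen hl; omega)] at h
  exact Option.some_injective _ h

lemma pathAdj {l : List V} (hl : l ∈ PathSet G x y A) {i : ℕ}
    (hi : i + 1 < l.length) :
    G.Adj (l[i]'(by omega)) (l[i+1]'hi) := by
  have := List.isChain_iff_getElem.mp hl.1 i (by omega)
  simpa using this

/-- The shortcut construction. -/
lemma pathShortcut {l : List V} (hl : l ∈ PathSet G x y A) {i k : ℕ}
    (hik : i < k) (hk : k ≤ l.length) (h2 : 2 ≤ i + 1 + (l.length - k))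
    (hjun : ∀ hh : k < l.length, G.Adj (l[i]'(by omega)) (l[k]'hh))
    (hlast : k = l.length → l[i]'(by omega) = y) :
    l.take (i+1) ++ l.drop k ∈ PathSet G x y A ∧
      (l.take (i+1) ++ l.drop k).length = i + 1 + (l.length - k) := by
  have hi : i < l.length := by omega
  have hlen : (l.take (i+1) ++ l.drop k).length = i + 1 + (l.length - k) := by
    simp [List.length_take, List.length_drop]; omega
  have htl : (l.take (i+1)).length = i + 1 := by simp [List.length_take]; omega
  have hgl : (l.take (i+1)).getLast? = some (l[i]'hi) := by
    rw [List.getLast?_eq_getElem?, htl]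
    rw [List.getElem?_eq_getElem (by omega : i + 1 - 1 < (l.take (i+1)).length)]
    congr 1
    simp [List.getElem_take]
  refine ⟨⟨?_, ?_, ?_, ?_, ?_⟩, hlen⟩
  · refine List.IsChain.append (List.IsChain.take hl.1 _) (List.IsChain.drop hl.1 _) ?_
    intro a ha b hb
    rw [hgl, Option.mem_def, Option.some_inj] at ha
    have hkl : k < l.length := by
      by_contra hc
      have : l.drop k = [] := List.drop_eq_nil_of_le (by omega)
      rw [this] at hb; simp at hb
    rw [List.head?_eq_getElem?] at hb
    have hdl : 0 < (l.drop k).length := by simp [List.length_drop]; omega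
    rw [List.getElem?_eq_getElem hdl, Option.mem_def, Option.some_inj] at hb
    have : (l.drop k)[0] = l[k] := by simp [List.getElem_drop]
    rw [this] at hb
    rw [← ha, ← hb] at *
    exact hjun hkl
  · rw [hlen]; omega
  · rw [List.head?_append]
    have : (l.take (i+1)).head? = some x := by
      rw [List.head?_eq_getElem?, List.getElem?_eq_getElem (by omega : 0 < (l.take (i+1)).length)]
      have : (l.take (i+1))[0] = l[0] := List.getElem_take
      rw [this, pathFirst hl]
    rw [this]; rfl
  · rcases Nat.lt_or_ge k l.length with hkl | hkl
    · have hne : l.drop k ≠ [] := by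
        intro hc; have := congrArg List.length hc; simp [List.length_drop] at this; omega
      rw [List.getLast?_append, List.getLast?_eq_getElem? (l := l.drop k)]
      have hdl : (l.drop k).length - 1 < (l.drop k).length := by simp [List.length_drop]; omega
      rw [List.getElem?_eq_getElem hdl]
      have : (l.drop k)[(l.drop k).length - 1] = l[l.length - 1]'(by omega) := by
        rw [List.getElem_drop]
        congr 1
        simp [List.length_drop]; omega
      rw [this, pathLast hl]; rfl
    · have hke : k = l.length := by omega
      have : l.drop k = [] := List.drop_eq_nil_of_le (by omega)
      rw [this, List.append_nil, hgl, hlast hke]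
  · intro z hz
    rcases List.mem_append.mp hz with h | h
    · exact hl.2.2.2.2 z (List.mem_of_mem_take h)
    · exact hl.2.2.2.2 z (List.mem_of_mem_drop h)

end path

section minpath
variable {V : Type*} {G : SimpleGraph V} {x y : V} {A : Set V}

lemma exists_minPath (hne : (PathSet G x y A).Nonempty) :
    ∃ l ∈ PathSet G x y A, ∀ l' ∈ PathSet G x y A, l.length ≤ l'.length := by
  obtain ⟨l0, hl0⟩ := hne
  have hS : {n | ∃ l ∈ PathSet G x y A, l.length = n}.Nonempty := ⟨l0.length, l0, hl0, rfl⟩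
  obtain ⟨l, hl, hlen⟩ := Nat.sInf_mem hS
  refine ⟨l, hl, fun l' hl' => ?_⟩
  rw [hlen]
  exact Nat.sInf_le ⟨l', hl', rfl⟩

lemma minPath_induced {l : List V} (hl : l ∈ PathSet G x y A)
    (hmin : ∀ l' ∈ PathSet G x y A, l.length ≤ l'.length) {i j : ℕ}
    (hij : i + 2 ≤ j) (hj : j < l.length) : ¬ G.Adj (l[i]'(by omega)) (l[j]'hj) := by
  intro hadj
  obtain ⟨hmem, hlen⟩ := pathShortcut hl (show i < j by omega) (by omega) (by omega)
    (fun _ => hadj) (fun h => absurd h (by omega))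
  have := hmin _ hmem
  omega

lemma minPath_nodup (hxy : x ≠ y) {l : List V} (hl : l ∈ PathSet G x y A)
    (hmin : ∀ l' ∈ PathSet G x y A, l.length ≤ l'.length) {i j : ℕ}
    (hij : i < j) (hj : j < l.length) : l[i]'(by omega) ≠ l[j]'hj := by
  intro heq
  have h2 : 2 ≤ i + 1 + (l.length - (j+1)) := by
    rcases Nat.lt_or_ge (j+1) l.length with h | h
    · omega
    · have hj1 : j = l.length - 1 := by omega
      have : 1 ≤ i := by
        by_contra hc
        have hi0 : i = 0 := by omega
        apply hxy
        have e1 : x = l[j]'hj := by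
          rw [← heq]; subst hi0; exact (pathFirst hl).symm
        rw [e1]
        have := pathLast hl
        convert this using 2 <;> omega
      omega
  obtain ⟨hmem, hlen⟩ := pathShortcut hl (show i < j + 1 by omega) (by omega) h2
    (fun hh => by rw [show l[i]'(by omega) = l[j]'hj from heq]; exact pathAdj hl hh)
    (fun h => by rw [heq]; have := pathLast hl; convert this using 2; omega)
  have := hmin _ hmem
  omega

lemma minPath_interior {l : List V} (hxy : x ≠ y) (hl : l ∈ PathSet G x y A)
    (hmin : ∀ l' ∈ PathSet G x y A, l.length ≤ l'.length) {p : ℕ}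
    (hp1 : 1 ≤ p) (hp2 : p < l.length - 1) : l[p]'(by omega) ∈ A := by
  have hmem := hl.2.2.2.2 _ (List.getElem_mem (l := l) (n := p) (by omega))
  rcases hmem with h | h | h
  · exfalso
    refine minPath_nodup hxy hl hmin (show 0 < p by omega) (by omega) ?_
    rw [pathFirst hl, h]
  · exfalso
    refine minPath_nodup hxy hl hmin (show p < l.length - 1 by omega) (by omega) ?_
    rw [pathLast hl, h]
  · exact h

lemma minPath_three (hnadj : ¬ G.Adj x y) {l : List V} (hl : l ∈ PathSet G x y A) :
    3 ≤ l.length := by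
  rcases Nat.lt_or_ge l.length 3 with h | h
  · exfalso
    have h2 := pathLen hl
    have hlen : l.length = 2 := by omega
    have := pathAdj hl (i := 0) (by omega)
    rw [pathFirst hl] at this
    have h1 : l[1]'(by omega) = y := by
      have := pathLast hl; convert this using 2; omega
    rw [h1] at this
    exact hnadj this
  · exact h

end minpath

section twopaths
variable {V : Type*} {G : SimpleGraph V}

lemma not_chordal_two_paths {x y : V} {A B : Set V}
    (hxy : x ≠ y) (hnadj : ¬ G.Adj x y)
    (hAB : ∀ p ∈ A, ∀ q ∈ B, p ≠ q ∧ ¬ G.Adj p q)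
    (hA : (PathSet G x y A).Nonempty) (hB : (PathSet G y x B).Nonempty) :
    ¬ Chordal G := by
  obtain ⟨lA, hlA, hminA⟩ := exists_minPath hA
  obtain ⟨lB, hlB, hminB⟩ := exists_minPath hB
  have ha3 : 3 ≤ lA.length := minPath_three hnadj hlA
  have hb3 : 3 ≤ lB.length := minPath_three (fun h => hnadj h.symm) hlB
  set a := lA.length with hadef
  set b := lB.length with hbdef
  set n := (a - 1) + (b - 1) with hndef
  set g : ℕ → V := fun p =>
    if h : p < a - 1 then lA[p]'(by omega)
    else if h2 : p - (a-1) < b then lB[p - (a-1)]'(by omega) else x with hg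
  have gA : ∀ p, (hp : p ≤ a - 1) → g p = lA[p]'(by omega) := by
    intro p hp
    rw [hg]
    dsimp only
    rcases Nat.lt_or_ge p (a-1) with h | h
    · rw [dif_pos h]
    · rw [dif_neg (by omega), dif_pos (by omega)]
      have h0 : lB[p - (a-1)]'(by omega) = y := by
        have := pathFirst hlB; convert this using 2; omega
      have h1 : lA[p]'(by omega) = y := by
        have := pathLast hlA; convert this using 2 <;> omega
      rw [h0, h1]
  have gB : ∀ p, (hp : a - 1 ≤ p) → (hp2 : p < n) → g p = lB[p - (a-1)]'(by omega) := by
    intro p hp hp2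
    rw [hg]
    dsimp only
    rw [dif_neg (by omega), dif_pos (by omega)]
  -- interiors
  have intA : ∀ p, (h1 : 1 ≤ p) → (h2 : p < a - 1) → lA[p]'(by omega) ∈ A :=
    fun p h1 h2 => minPath_interior hxy hlA hminA h1 (by omega)
  have intB : ∀ t, (h1 : 1 ≤ t) → (h2 : t < b - 1) → lB[t]'(by omega) ∈ B :=
    fun t h1 h2 => minPath_interior (Ne.symm hxy) hlB hminB h1 (by omega)
  refine not_chordal_of_cycleFun G n g (by omega) ?_ ?_
  · -- injectivity
    intro p q hpq hq
    rcases Nat.lt_or_ge q a with hqa | hqa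
    · rw [gA p (by omega), gA q (by omega)]
      exact minPath_nodup hxy hlA hminA hpq (by omega)
    · rcases Nat.lt_or_ge p (a-1) with hpa | hpa
      · rcases Nat.eq_or_lt_of_le (Nat.zero_le p) with hp0 | hp0
        · subst hp0
          rw [gA 0 (by omega), gB q (by omega) (by omega)]
          have hx0 : lA[0]'(by omega) = x := pathFirst hlA
          rw [hx0]
          have hxlast : lB[b-1]'(by omega) = x := by
            have := pathLast hlB; convert this using 2 <;> omega
          rw [← hxlast]
          exact (minPath_nodup (Ne.symm hxy) hlB hminB (show q - (a-1) < b - 1 by omega)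
            (by omega)).symm
        · rw [gA p (by omega), gB q (by omega) (by omega)]
          have h1 := intA p (by omega) (by omega)
          have h2 := intB (q - (a-1)) (by omega) (by omega)
          exact (hAB _ h1 _ h2).1
      · rw [gB p (by omega) (by omega), gB q (by omega) (by omega)]
        exact minPath_nodup (Ne.symm hxy) hlB hminB
          (show p - (a-1) < q - (a-1) by omega) (by omega)
  · -- adjacency
    intro p q hpq hq
    rcases Nat.lt_or_ge q a with hqa | hqa
    · -- both in lA
      rw [gA p (by omega), gA q (by omega)]
      constructor
      · intro hadj
        by_contra hc
        push_neg at hc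
        have hq2 : p + 2 ≤ q := by omega
        exact minPath_induced hlA hminA hq2 (by omega) hadj
      · rintro (rfl | ⟨hp0, hqn⟩)
        · exact pathAdj hlA (by omega)
        · omega
    · rcases Nat.lt_or_ge p (a-1) with hpa | hpa
      · rcases Nat.eq_or_lt_of_le (Nat.zero_le p) with hp0 | hp0
        · -- p = 0 : x against interior of lB
          subst hp0
          rw [gA 0 (by omega), gB q (by omega) (by omega), pathFirst hlA]
          have hxlast : lB[b-1]'(by omega) = x := by
            have := pathLast hlB; convert this using 2 <;> omega
          rw [← hxlast, G.adj_comm]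
          constructor
          · intro hadj
            by_contra hc
            push_neg at hc
            have : q - (a-1) + 2 ≤ b - 1 := by omega
            exact minPath_induced hlB hminB this (by omega) hadj
          · rintro (h | ⟨hp0', hqn⟩)
            · omega
            · have : q - (a-1) = b - 2 := by omega
              have hstep := pathAdj hlB (i := b - 2) (by omega)
              convert hstep using 2 <;> omega
        · -- interior of lA against interior of lB
          rw [gA p (by omega), gB q (by omega) (by omega)]
          have h1 := intA p (by omega) (by omega)
          have h2 := intB (q - (a-1)) (by omega) (by omega)
          constructor
          · intro hadj
            exact ((hAB _ h1 _ h2).2 hadj).elim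
          · rintro (h | ⟨hp0, hqn⟩) <;> omega
      · -- both in lB
        rw [gB p (by omega) (by omega), gB q (by omega) (by omega)]
        constructor
        · intro hadj
          by_contra hc
          push_neg at hc
          have hq2 : p - (a-1) + 2 ≤ q - (a-1) := by omega
          exact minPath_induced hlB hminB hq2 (by omega) hadj
        · rintro (rfl | ⟨hp0, hqn⟩)
          · have hstep := pathAdj hlB (i := p - (a-1)) (by omega)
            convert hstep using 2 <;> omega
          · omega

end twopaths
section conn
variable {V : Type*} (G : SimpleGraph V)

/-- One adjacency step inside the vertex set `W`. -/
def CStep (W : Set V) (p q : V) : Prop := p ∈ W ∧ q ∈ W ∧ G.Adj p q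

/-- Connectivity inside `W`. -/
def Conn (W : Set V) (x y : V) : Prop := Relation.ReflTransGen (CStep G W) x y

variable {G}

lemma CStep.symm {W : Set V} {p q : V} (h : CStep G W p q) : CStep G W q p :=
  ⟨h.2.1, h.1, h.2.2.symm⟩

lemma Conn.symm {W : Set V} {x y : V} (h : Conn G W x y) : Conn G W y x :=
  by
    haveI : Std.Symm (CStep G W) := ⟨fun _ _ h => CStep.symm h⟩
    exact Relation.ReflTransGen.stdSymm.symm _ _ h

lemma Conn.trans {W : Set V} {x y z : V} (h : Conn G W x y) (h' : Conn G W y z) :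
    Conn G W x z := Relation.ReflTransGen.trans h h'

lemma Conn.mem_right {W : Set V} {x y : V} (hx : x ∈ W) (h : Conn G W x y) : y ∈ W := by
  induction h with
  | refl => exact hx
  | tail _ h ih => exact h.2.1

/-- Removing a cut vertex: a path in `insert w W` either avoids `w` or first reaches a
neighbour of `w` inside `W`. -/
lemma conn_insert {W : Set V} {w a b : V} (h : Conn G (insert w W) a b) (ha : a ∈ W)
    (hb : b ∈ W) :
    Conn G W a b ∨ ∃ p, p ∈ W ∧ Conn G W a p ∧ G.Adj p w := by
  revert ha
  induction h using Relation.ReflTransGen.head_induction_on with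
  | refl => exact fun _ => Or.inl Relation.ReflTransGen.refl
  | head h' hcb ih =>
    rename_i z c
    intro hzW
    obtain ⟨_, hc, hadj⟩ := h'
    rcases Set.mem_insert_iff.mp hc with rfl | hcW
    · exact Or.inr ⟨z, hzW, Relation.ReflTransGen.refl, hadj⟩
    · rcases ih hcW with h | ⟨p, hp, hconn, hpw⟩
      · exact Or.inl (Relation.ReflTransGen.head ⟨hzW, hcW, hadj⟩ h)
      · exact Or.inr ⟨p, hp, Relation.ReflTransGen.head ⟨hzW, hcW, hadj⟩ hconn, hpw⟩

end conn

section dirac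
variable {V : Type*} [DecidableEq V] {G : SimpleGraph V}

/-- A simplicial vertex relative to the vertex set `s`. -/
def SimpVert (G : SimpleGraph V) (s : Finset V) (v : V) : Prop :=
  ∀ a ∈ s, ∀ b ∈ s, G.Adj v a → G.Adj v b → a ≠ b → G.Adj a b

/-- `conn_list` specialised: a path list through the component of the root. -/
lemma conn_to_list {W : Set V} {p q : V} (h : Conn G W p q) :
    ∃ l : List V, l ≠ [] ∧ l.head? = some p ∧ l.getLast? = some q ∧ l.Chain' G.Adj ∧
      ∀ z ∈ l, Conn G W p z := by
  induction h with
  | refl =>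
    refine ⟨[p], by simp, rfl, rfl, List.isChain_singleton _, ?_⟩
    intro z hz
    simp only [List.mem_singleton] at hz
    subst hz
    exact Relation.ReflTransGen.refl
  | tail hab hbc ih =>
    rename_i c d
    obtain ⟨l, hne, hhd, hlast, hch, hmem⟩ := ih
    refine ⟨l ++ [d], by simp, ?_, List.getLast?_concat, ?_, ?_⟩
    · rw [List.head?_append, hhd]; rfl
    · refine List.IsChain.append hch (by simp) ?_
      intro u hu v hv
      rw [hlast, Option.mem_def, Option.some_inj] at hu
      simp only [List.head?_cons, Option.mem_def, Option.some_inj] at hv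
      rw [← hu, ← hv]
      exact hbc.2.2
    · intro z hz
      rcases List.mem_append.mp hz with h | h
      · exact hmem z h
      · simp only [List.mem_singleton] at h
        subst h
        exact hab.tail hbc

theorem dirac_strong (hG : Chordal G) :
    ∀ n (s : Finset V), s.card ≤ n →
      (∀ a ∈ s, ∀ b ∈ s, a ≠ b → G.Adj a b) ∨
      ∃ p ∈ s, ∃ q ∈ s, p ≠ q ∧ ¬ G.Adj p q ∧ SimpVert G s p ∧ SimpVert G s q := by
  intro n
  induction n with
  | zero =>
    intro s hs
    left
    intro a ha
    exact absurd (Finset.card_pos.mpr ⟨a, ha⟩) (by omega)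
  | succ n IH =>
    intro s hs
    by_cases hcomp : ∀ a ∈ s, ∀ b ∈ s, a ≠ b → G.Adj a b
    · exact Or.inl hcomp
    right
    push_neg at hcomp
    obtain ⟨a, ha, b, hb, hab, hnadj⟩ := hcomp
    -- separators
    classical
    set Sep : Finset V → Prop := fun S =>
      S ⊆ s ∧ a ∉ S ∧ b ∉ S ∧ ¬ Conn G {z | z ∈ s ∧ z ∉ S} a b with hSepdef
    have hSep0 : Sep ((s.erase a).erase b) := by
      refine ⟨(Finset.erase_subset _ _).trans (Finset.erase_subset _ _), ?_, ?_, ?_⟩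
      · intro h; exact (Finset.mem_erase.mp (Finset.mem_of_mem_erase h)).1 rfl
      · intro h; exact (Finset.mem_erase.mp h).1 rfl
      · intro h
        rcases Relation.ReflTransGen.cases_head h with h' | ⟨c, hstep, _⟩
        · exact hab h'
        · obtain ⟨_, ⟨hcs, hcne⟩, hadj⟩ := hstep
          have : c = b ∨ c = a := by
            by_contra hc
            push_neg at hc
            exact hcne (Finset.mem_erase.mpr ⟨hc.1, Finset.mem_erase.mpr ⟨hc.2, hcs⟩⟩)
          rcases this with rfl | rfl
          · exact hnadj hadj
          · exact G.irrefl hadj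
    have hPne : {k | ∃ S, Sep S ∧ S.card = k}.Nonempty := ⟨_, _, hSep0, rfl⟩
    obtain ⟨S, hSep, hScard⟩ := Nat.sInf_mem hPne
    have hSmin : ∀ S', Sep S' → S.card ≤ S'.card := by
      intro S' hS'
      rw [hScard]
      exact Nat.sInf_le ⟨S', hS', rfl⟩
    set W : Set V := {z | z ∈ s ∧ z ∉ S} with hWdef
    have haW : a ∈ W := ⟨ha, hSep.2.1⟩
    have hbW : b ∈ W := ⟨hb, hSep.2.2.1⟩
    have hnoconn : ¬ Conn G W a b := hSep.2.2.2
    -- neighbours of separator vertices in both components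
    have hconn_ins : ∀ x ∈ S, Conn G (insert x W) a b := by
      intro x hx
      have hxs : x ∈ s := hSep.1 hx
      have hne : ¬ Sep (S.erase x) := by
        intro hc
        have := hSmin _ hc
        have := Finset.card_erase_of_mem hx
        have hpos : 0 < S.card := Finset.card_pos.mpr ⟨x, hx⟩
        omega
      have hne' : ¬ (S.erase x ⊆ s ∧ a ∉ S.erase x ∧ b ∉ S.erase x ∧
          ¬ Conn G {z | z ∈ s ∧ z ∉ S.erase x} a b) := hne
      push_neg at hne'
      have h1 : S.erase x ⊆ s := (Finset.erase_subset _ _).trans hSep.1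
      have h2 : a ∉ S.erase x := fun h => hSep.2.1 (Finset.mem_of_mem_erase h)
      have h3 : b ∉ S.erase x := fun h => hSep.2.2.1 (Finset.mem_of_mem_erase h)
      have hconn := hne' h1 h2 h3
      have hseteq : {z | z ∈ s ∧ z ∉ S.erase x} = insert x W := by
        ext z
        simp only [Set.mem_setOf_eq, Finset.mem_erase, Set.mem_insert_iff, hWdef]
        constructor
        · rintro ⟨hzs, hz⟩
          by_cases hzx : z = x
          · exact Or.inl hzx
          · exact Or.inr ⟨hzs, fun hzS => hz ⟨hzx, hzS⟩⟩
        · rintro (rfl | ⟨hzs, hzS⟩)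
          · exact ⟨hxs, fun hh => hh.1 rfl⟩
          · exact ⟨hzs, fun hh => hzS hh.2⟩
      rw [hseteq] at hconn
      exact hconn
    have hnbrA : ∀ x ∈ S, ∃ p, Conn G W a p ∧ G.Adj p x := by
      intro x hx
      rcases conn_insert (hconn_ins x hx) haW hbW with h | ⟨p, _, hconn, hadj⟩
      · exact absurd h hnoconn
      · exact ⟨p, hconn, hadj⟩
    have hnbrB : ∀ x ∈ S, ∃ p, Conn G W b p ∧ G.Adj p x := by
      intro x hx
      rcases conn_insert (Conn.symm (hconn_ins x hx)) hbW haW with h | ⟨p, _, hconn, hadj⟩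
      · exact absurd h.symm hnoconn
      · exact ⟨p, hconn, hadj⟩
    -- components
    set CA : Set V := {z | Conn G W a z} with hCAdef
    set CB : Set V := {z | Conn G W b z} with hCBdef
    have hdisj : ∀ z, z ∈ CA → z ∈ CB → False := by
      intro z h1 h2
      exact hnoconn (h1.trans h2.symm)
    have hCAW : ∀ z ∈ CA, z ∈ W := fun z hz => Conn.mem_right haW hz
    have hCBW : ∀ z ∈ CB, z ∈ W := fun z hz => Conn.mem_right hbW hz
    have hAB : ∀ p ∈ CA, ∀ q ∈ CB, p ≠ q ∧ ¬ G.Adj p q := by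
      intro p hp q hq
      constructor
      · rintro rfl; exact hdisj p hp hq
      · intro hadj
        exact hdisj q (hp.tail ⟨hCAW p hp, hCBW q hq, hadj⟩) hq
    -- the separator is a clique
    have hclique : ∀ x ∈ S, ∀ y ∈ S, x ≠ y → G.Adj x y := by
      intro x hx y hy hxy
      by_contra hnadjxy
      refine not_chordal_two_paths hxy hnadjxy hAB ?_ ?_ hG
      · -- path from x to y through CA
        obtain ⟨p, hp, hpx⟩ := hnbrA x hx
        obtain ⟨p', hp', hp'y⟩ := hnbrA y hy
        obtain ⟨l, hne, hhd, hlast, hch, hmem⟩ := conn_to_list (hp.symm.trans hp')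
        refine ⟨(x :: l) ++ [y], ?_, ?_, ?_, List.getLast?_concat, ?_⟩
        · refine List.IsChain.append ?_ (by simp) ?_
          · rw [List.isChain_cons]
            refine ⟨?_, hch⟩
            intro u hu
            rw [hhd, Option.mem_def, Option.some_inj] at hu
            rw [← hu]
            exact hpx.symm
          · intro u hu v hv
            rw [List.getLast?_cons, hlast] at hu
            · simp only [Option.mem_def, Option.some_inj] at hu
              simp only [List.head?_cons, Option.mem_def, Option.some_inj] at hv
              rw [← hu, ← hv]
              exact hp'y
        · simp [List.length_append]
        · rfl
        · intro z hz
          rcases List.mem_append.mp hz with h | h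
          · rcases List.mem_cons.mp h with rfl | h
            · exact Or.inl rfl
            · exact Or.inr (Or.inr (hp.trans (hmem z h)))
          · simp only [List.mem_singleton] at h
            exact Or.inr (Or.inl h)
      · -- path from y to x through CB
        obtain ⟨p, hp, hpy⟩ := hnbrB y hy
        obtain ⟨p', hp', hp'x⟩ := hnbrB x hx
        obtain ⟨l, hne, hhd, hlast, hch, hmem⟩ := conn_to_list (hp.symm.trans hp')
        refine ⟨(y :: l) ++ [x], ?_, ?_, ?_, List.getLast?_concat, ?_⟩
        · refine List.IsChain.append ?_ (by simp) ?_
          · rw [List.isChain_cons]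
            refine ⟨?_, hch⟩
            intro u hu
            rw [hhd, Option.mem_def, Option.some_inj] at hu
            rw [← hu]
            exact hpy.symm
          · intro u hu v hv
            rw [List.getLast?_cons, hlast] at hu
            · simp only [Option.mem_def, Option.some_inj] at hu
              simp only [List.head?_cons, Option.mem_def, Option.some_inj] at hv
              rw [← hu, ← hv]
              exact hp'x
        · simp [List.length_append]
        · rfl
        · intro z hz
          rcases List.mem_append.mp hz with h | h
          · rcases List.mem_cons.mp h with rfl | h
            · exact Or.inl rfl
            · exact Or.inr (Or.inr (hp.trans (hmem z h)))
          · simp only [List.mem_singleton] at h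
            exact Or.inr (Or.inl h)
    -- one simplicial vertex in each component
    have side : ∀ r t : V, r ∈ W → t ∈ s → t ∉ S → ¬ Conn G W r t →
        ∃ p, Conn G W r p ∧ SimpVert G s p := by
      intro r t hrW hts htS hnc
      set sR : Finset V := s.filter (fun z => Conn G W r z ∨ z ∈ S) with hsRdef
      have hsub : sR ⊆ s := Finset.filter_subset _ _
      have htR : t ∉ sR := by
        intro h
        rcases (Finset.mem_filter.mp h).2 with h' | h'
        · exact hnc h'
        · exact htS h'
      have hcard : sR.card ≤ n := by
        have : sR ⊂ s := ⟨hsub, fun h => htR (h hts)⟩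
        have := Finset.card_lt_card this
        omega
      -- key: neighbours in `s` of a vertex of the component lie in `sR`
      have hnbr_in : ∀ p, Conn G W r p → ∀ c ∈ s, G.Adj p c → c ∈ sR := by
        intro p hp c hcs hadj
        by_cases hcS : c ∈ S
        · exact Finset.mem_filter.mpr ⟨hcs, Or.inr hcS⟩
        · refine Finset.mem_filter.mpr ⟨hcs, Or.inl ?_⟩
          exact hp.tail ⟨Conn.mem_right hrW hp, ⟨hcs, hcS⟩, hadj⟩
      rcases IH sR hcard with hcomp | ⟨p1, hp1, p2, hp2, hne12, hnadj12, hsimp1, hsimp2⟩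
      · refine ⟨r, Relation.ReflTransGen.refl, ?_⟩
        intro c hc d hd hac had hcd
        exact hcomp c (hnbr_in r Relation.ReflTransGen.refl c hc hac) d
          (hnbr_in r Relation.ReflTransGen.refl d hd had) hcd
      · -- at least one of p1 p2 lies in the component
        have hkey : ∀ p, p ∈ sR → SimpVert G sR p → Conn G W r p →
            ∃ p', Conn G W r p' ∧ SimpVert G s p' := by
          intro p hpR hpsimp hpconn
          refine ⟨p, hpconn, ?_⟩
          intro c hc d hd hac had hcd
          exact hpsimp c (hnbr_in p hpconn c hc hac) d (hnbr_in p hpconn d hd had) hac had hcd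
        have h1 : Conn G W r p1 ∨ p1 ∈ S := by
          rcases (Finset.mem_filter.mp hp1).2 with h | h
          · exact Or.inl h
          · exact Or.inr h
        have h2 : Conn G W r p2 ∨ p2 ∈ S := by
          rcases (Finset.mem_filter.mp hp2).2 with h | h
          · exact Or.inl h
          · exact Or.inr h
        rcases h1 with h1 | h1
        · exact hkey p1 hp1 hsimp1 h1
        · rcases h2 with h2 | h2
          · exact hkey p2 hp2 hsimp2 h2
          · exact absurd (hclique p1 h1 p2 h2 hne12) hnadj12
    obtain ⟨p, hpconn, hpsimp⟩ := side a b haW hb hSep.2.2.1 hnoconn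
    obtain ⟨q, hqconn, hqsimp⟩ := side b a hbW ha hSep.2.1 (fun h => hnoconn h.symm)
    have hpq := hAB p hpconn q hqconn
    exact ⟨p, (Conn.mem_right haW hpconn).1, q, (Conn.mem_right hbW hqconn).1,
      hpq.1, hpq.2, hpsimp, hqsimp⟩

theorem exists_simpVert (hG : Chordal G) (s : Finset V) (hs : s.Nonempty) :
    ∃ v ∈ s, SimpVert G s v := by
  rcases dirac_strong hG s.card s le_rfl with hcomp | ⟨p, hp, _, _, _, _, hsimp, _⟩
  · obtain ⟨v, hv⟩ := hs
    exact ⟨v, hv, fun c hc d hd _ _ hcd => hcomp c hc d hd hcd⟩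
  · exact ⟨p, hp, hsimp⟩

end dirac

section main
variable {V : Type*} [DecidableEq V] {G : SimpleGraph V}

/-- Independent subsets of `s` (including `∅`). -/
def Xs (G : SimpleGraph V) (s : Finset V) : Set (Finset V) :=
  {σ | σ ⊆ s ∧ ∀ x ∈ σ, ∀ y ∈ σ, ¬ G.Adj x y}


lemma goodEmpty (G : SimpleGraph V) :
    ∃ M, IsMatching (Xs G (∅ : Finset V)) M ∧
      (∀ σ, ¬ Relation.TransGen (matchStep (Xs G ∅) M) σ σ) ∧
      ∀ σ, IsCritical (Xs G ∅) M σ → IsMaximalFace (Xs G ∅) σ := by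
  refine ⟨∅, ⟨?_, ?_, ?_, ?_, ?_⟩, ?_, ?_⟩ <;> try simp
  · intro σ h
    have hstep : ∀ α β, ¬ matchStep (Xs G ∅) (∅ : Set (Finset V × Finset V)) α β := by
      rintro α β ⟨hα, hβ, h | ⟨hsub, hcard, -⟩⟩
      · exact h
      · have h1 : α = ∅ := Finset.subset_empty.mp hα.1
        have h2 : β = ∅ := Finset.subset_empty.mp hβ.1
        subst h1; subst h2
        simp at hcard
    cases h with
    | single h => exact hstep _ _ h
    | tail _ h => exact hstep _ _ h
  · rintro σ ⟨hσ, -⟩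
    have h1 : σ = ∅ := Finset.subset_empty.mp hσ.1
    subst h1
    exact ⟨hσ, fun τ hτ _ => (Finset.subset_empty.mp hτ.1).symm⟩

theorem goodMatching (hG : Chordal G) :
    ∀ n (s : Finset V), s.card ≤ n →
      ∃ M, IsMatching (Xs G s) M ∧
        (∀ σ, ¬ Relation.TransGen (matchStep (Xs G s) M) σ σ) ∧
        ∀ σ, IsCritical (Xs G s) M σ → IsMaximalFace (Xs G s) σ := by
  intro n
  induction n with
  | zero =>
    intro s hs
    have hse : s = ∅ := Finset.card_eq_zero.mp (by omega)
    subst hse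
    exact goodEmpty G
  | succ n IH =>
    intro s hs
    rcases s.eq_empty_or_nonempty with rfl | hsne
    · exact goodEmpty G
    classical
    obtain ⟨v, hvs, hvsimp⟩ := exists_simpVert hG s hsne
    set Nv : Finset V := s.filter (fun z => G.Adj v z) with hNvdef
    set su : V → Finset V := fun u => (s.erase u).filter (fun z => ¬ G.Adj u z) with hsudef
    have hsu_sub : ∀ u, su u ⊆ s := fun u =>
      (Finset.filter_subset _ _).trans (Finset.erase_subset _ _)
    have hsu_card : ∀ u ∈ Nv, (su u).card ≤ n := by
      intro u hu
      have hus : u ∈ s := (Finset.mem_filter.mp hu).1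
      have h1 : (su u).card ≤ (s.erase u).card := Finset.card_le_card (Finset.filter_subset _ _)
      have h2 := Finset.card_erase_of_mem hus
      have h3 : 0 < s.card := Finset.card_pos.mpr ⟨u, hus⟩
      omega
    have hIH : ∀ u : V, ∃ M, u ∈ Nv →
        (IsMatching (Xs G (su u)) M ∧
          (∀ σ, ¬ Relation.TransGen (matchStep (Xs G (su u)) M) σ σ) ∧
          ∀ σ, IsCritical (Xs G (su u)) M σ → IsMaximalFace (Xs G (su u)) σ) := by
      intro u
      by_cases hu : u ∈ Nv
      · obtain ⟨M, hM⟩ := IH (su u) (hsu_card u hu)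
        exact ⟨M, fun _ => hM⟩
      · exact ⟨∅, fun h => absurd h hu⟩
    choose Mu hMu using hIH
    set typ : Finset V → Finset V := fun σ => σ.filter (fun z => G.Adj v z) with htypdef
    set Mv : Set (Finset V × Finset V) :=
      {p | ∃ σ, σ ∈ Xs G s ∧ v ∉ σ ∧ (∀ z ∈ σ, ¬ G.Adj v z) ∧ p = (σ, insert v σ)}
      with hMvdef
    set lif : V → Set (Finset V × Finset V) :=
      fun u => {p | ∃ q ∈ Mu u, p = (insert u q.1, insert u q.2)} with hlifdef
    set MM : Set (Finset V × Finset V) := Mv ∪ {p | ∃ u ∈ Nv, p ∈ lif u} with hMMdef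
    -- basic facts
    have hNv_mem : ∀ u, u ∈ Nv ↔ (u ∈ s ∧ G.Adj v u) := by
      intro u; rw [hNvdef]; simp [Finset.mem_filter]
    have hXsub : ∀ σ ∈ Xs G s, ∀ τ, τ ⊆ σ → τ ∈ Xs G s := by
      intro σ hσ τ hτ
      exact ⟨hτ.trans hσ.1, fun x hx y hy => hσ.2 x (hτ hx) y (hτ hy)⟩
    have htyp_sub : ∀ σ, typ σ ⊆ σ := fun σ => Finset.filter_subset _ _
    have htyp_mono : ∀ σ τ : Finset V, σ ⊆ τ → typ σ ⊆ typ τ := by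
      intro σ τ h; exact Finset.filter_subset_filter _ h
    have htyp_mem : ∀ σ z, z ∈ typ σ ↔ (z ∈ σ ∧ G.Adj v z) := by
      intro σ z; rw [htypdef]; simp [Finset.mem_filter]
    have htyp_empty_iff : ∀ σ : Finset V, typ σ = ∅ ↔ ∀ z ∈ σ, ¬ G.Adj v z := by
      intro σ; rw [htypdef]; exact Finset.filter_eq_empty_iff
    have htyp_v : ∀ σ ∈ Xs G s, v ∈ σ → typ σ = ∅ := by
      intro σ hσ hv
      rw [htyp_empty_iff]
      exact fun z hz => hσ.2 v hv z hz
    have hF1 : ∀ σ ∈ Xs G s, typ σ ≠ ∅ → ∃ u ∈ Nv, typ σ = {u} := by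
      intro σ hσ hne
      obtain ⟨u, hu⟩ := Finset.nonempty_iff_ne_empty.mpr hne
      obtain ⟨huσ, huadj⟩ := (htyp_mem σ u).mp hu
      have huNv : u ∈ Nv := (hNv_mem u).mpr ⟨hσ.1 huσ, huadj⟩
      refine ⟨u, huNv, ?_⟩
      refine Finset.eq_singleton_iff_unique_mem.mpr ⟨hu, ?_⟩
      intro w hw
      obtain ⟨hwσ, hwadj⟩ := (htyp_mem σ w).mp hw
      by_contra hwu
      have hadj : G.Adj u w := hvsimp u (hσ.1 huσ) w (hσ.1 hwσ) huadj hwadj (Ne.symm hwu)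
      exact hσ.2 u huσ w hwσ hadj
    have hsu_mem : ∀ u z, z ∈ su u ↔ (z ∈ s ∧ z ≠ u ∧ ¬ G.Adj u z) := by
      intro u z; rw [hsudef]; simp [Finset.mem_filter, Finset.mem_erase]; tauto
    have hindep_insert : ∀ (w : V) (σ : Finset V), (∀ z ∈ σ, ¬ G.Adj w z) →
        (∀ x ∈ σ, ∀ y ∈ σ, ¬ G.Adj x y) →
        ∀ x ∈ insert w σ, ∀ y ∈ insert w σ, ¬ G.Adj x y := by
      intro w σ hw hσ x hx y hy
      rcases Finset.mem_insert.mp hx with h1 | h1 <;> rcases Finset.mem_insert.mp hy with h2 | h2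
      · rw [h1, h2]; exact G.irrefl
      · rw [h1]; exact hw y h2
      · rw [h2]; exact fun h => hw x h1 h.symm
      · exact hσ x h1 y h2
    have hF3a : ∀ u ∈ Nv, ∀ σ ∈ Xs G s, typ σ = {u} → u ∈ σ ∧ σ.erase u ∈ Xs G (su u) := by
      intro u hu σ hσ htσ
      have huσ : u ∈ σ := htyp_sub σ (htσ ▸ Finset.mem_singleton_self u)
      refine ⟨huσ, ?_, ?_⟩
      · intro z hz
        obtain ⟨hzu, hzσ⟩ := Finset.mem_erase.mp hz
        exact (hsu_mem u z).mpr ⟨hσ.1 hzσ, hzu, fun hadj => hσ.2 u huσ z hzσ hadj⟩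
      · intro x hx y hy
        exact hσ.2 x (Finset.mem_of_mem_erase hx) y (Finset.mem_of_mem_erase hy)
    have hF3b : ∀ u ∈ Nv, ∀ τ ∈ Xs G (su u),
        u ∉ τ ∧ insert u τ ∈ Xs G s ∧ typ (insert u τ) = {u} := by
      intro u hu τ hτ
      obtain ⟨hus, huadj⟩ := (hNv_mem u).mp hu
      have hunτ : u ∉ τ := fun h => ((hsu_mem u u).mp (hτ.1 h)).2.1 rfl
      have hXmem : insert u τ ∈ Xs G s :=
        ⟨Finset.insert_subset hus (hτ.1.trans (hsu_sub u)),
          hindep_insert u τ (fun z hz => ((hsu_mem u z).mp (hτ.1 hz)).2.2) hτ.2⟩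
      refine ⟨hunτ, hXmem, ?_⟩
      ext z
      rw [htyp_mem, Finset.mem_singleton]
      constructor
      · rintro ⟨hz, hzadj⟩
        rcases Finset.mem_insert.mp hz with rfl | hz
        · rfl
        · exfalso
          obtain ⟨hzs, hzu, hznadj⟩ := (hsu_mem u z).mp (hτ.1 hz)
          exact hznadj (hvsimp u hus z hzs huadj hzadj (Ne.symm hzu))
      · rintro rfl
        exact ⟨Finset.mem_insert_self _ _, huadj⟩
    have hMvX : ∀ σ, σ ∈ Xs G s → (∀ z ∈ σ, ¬ G.Adj v z) →
        insert v σ ∈ Xs G s ∧ typ σ = ∅ ∧ typ (insert v σ) = ∅ := by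
      intro σ hσ hnadj
      have hXmem : insert v σ ∈ Xs G s :=
        ⟨Finset.insert_subset hvs hσ.1, hindep_insert v σ hnadj hσ.2⟩
      refine ⟨hXmem, (htyp_empty_iff σ).mpr hnadj, (htyp_empty_iff _).mpr ?_⟩
      intro z hz
      rcases Finset.mem_insert.mp hz with rfl | hz
      · exact G.irrefl
      · exact hnadj z hz
    have hinsinj : ∀ (w : V) (c d : Finset V), w ∉ c → w ∉ d → insert w c = insert w d →
        c = d := by
      intro w c d hc hd h
      have := congrArg (fun t => Finset.erase t w) h
      simpa [Finset.erase_insert hc, Finset.erase_insert hd] using this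
    -- classification of matched pairs
    have hclass : ∀ p ∈ MM,
        (p ∈ Mv ∧ ∃ σ, σ ∈ Xs G s ∧ v ∉ σ ∧ (∀ z ∈ σ, ¬ G.Adj v z) ∧ p = (σ, insert v σ) ∧
          typ p.1 = ∅ ∧ typ p.2 = ∅ ∧ p.1 ∈ Xs G s ∧ p.2 ∈ Xs G s) ∨
        (∃ u ∈ Nv, p ∈ lif u ∧ ∃ q ∈ Mu u, p = (insert u q.1, insert u q.2) ∧
          typ p.1 = {u} ∧ typ p.2 = {u} ∧ u ∉ q.1 ∧ u ∉ q.2 ∧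
          p.1 ∈ Xs G s ∧ p.2 ∈ Xs G s) := by
      intro p hp
      rcases hp with hp | hp
      · left
        obtain ⟨σ, hσ, hvσ, hnadj, hpe⟩ := hp
        obtain ⟨hX2, ht1, ht2⟩ := hMvX σ hσ hnadj
        exact ⟨⟨σ, hσ, hvσ, hnadj, hpe⟩, σ, hσ, hvσ, hnadj, hpe,
          by rw [hpe]; exact ht1, by rw [hpe]; exact ht2, by rw [hpe]; exact hσ,
          by rw [hpe]; exact hX2⟩
      · right
        obtain ⟨u, hu, hpl⟩ := hp
        obtain ⟨q, hq, hpe⟩ := hpl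
        obtain ⟨hmat, -, -⟩ := hMu u hu
        have h1 := hF3b u hu q.1 (hmat.left_mem q hq)
        have h2 := hF3b u hu q.2 (hmat.right_mem q hq)
        exact ⟨u, hu, ⟨q, hq, hpe⟩, q, hq, hpe,
          by rw [hpe]; exact h1.2.2, by rw [hpe]; exact h2.2.2, h1.1, h2.1,
          by rw [hpe]; exact h1.2.1, by rw [hpe]; exact h2.2.1⟩
    have hsingne : ∀ u : V, ({u} : Finset V) ≠ ∅ := by
      intro u h
      exact absurd (h ▸ Finset.mem_singleton_self u) (Finset.notMem_empty u)
    -- MM is a matching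
    have hmatch : IsMatching (Xs G s) MM := by
      constructor
      · intro p hp
        rcases hclass p hp with ⟨-, σ, h⟩ | ⟨u, hu, -, q, hq, h⟩
        · exact h.2.2.2.2.2.2.1
        · exact h.2.2.2.2.2.1
      · intro p hp
        rcases hclass p hp with ⟨-, σ, h⟩ | ⟨u, hu, -, q, hq, h⟩
        · exact h.2.2.2.2.2.2.2
        · exact h.2.2.2.2.2.2
      · intro p hp
        rcases hclass p hp with ⟨-, σ, h⟩ | ⟨u, hu, -, q, hq, h⟩
        · rw [h.2.2.2.1]; exact Finset.subset_insert _ _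
        · rw [h.1]
          obtain ⟨hmat, -, -⟩ := hMu u hu
          exact Finset.insert_subset_insert _ (hmat.subset q hq)
      · intro p hp
        rcases hclass p hp with ⟨-, σ, hσ, hvσ, -, hpe, -⟩ | ⟨u, hu, -, q, hq, hpe, -, -, hq1, hq2, -⟩
        · rw [hpe]
          exact Finset.card_insert_of_notMem hvσ
        · rw [hpe]
          obtain ⟨hmat, -, -⟩ := hMu u hu
          rw [Finset.card_insert_of_notMem hq1, Finset.card_insert_of_notMem hq2,
            hmat.card_eq q hq]
      · -- eq_of_shared
        intro p hp q hq hshare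
        rcases hclass p hp with ⟨-, σ, hσ, hvσ, -, hpe, hpt1, hpt2, -⟩ |
            ⟨u, hu, -, a, ha, hpe, hpt1, hpt2, hua1, hua2, -⟩ <;>
          rcases hclass q hq with ⟨-, σ', hσ', hvσ', -, hqe, hqt1, hqt2, -⟩ |
            ⟨u', hu', -, b, hb, hqe, hqt1, hqt2, hub1, hub2, -⟩
        · -- both in Mv
          have hvins : v ∈ insert v σ := Finset.mem_insert_self _ _
          have hvins' : v ∈ insert v σ' := Finset.mem_insert_self _ _
          rw [hpe, hqe] at hshare ⊢
          dsimp only at hshare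
          simp only [Prod.mk.injEq]
          rcases hshare with h | h | h | h
          · exact ⟨h, by rw [h]⟩
          · exact absurd (show v ∈ σ by rw [h]; exact hvins') hvσ
          · exact absurd (show v ∈ σ' by rw [← h]; exact hvins) hvσ'
          · have h' : σ = σ' := hinsinj v σ σ' hvσ hvσ' h
            exact ⟨h', by rw [h']⟩
        · -- Mv vs lift: impossible
          exfalso
          rcases hshare with h | h | h | h
          · exact hsingne u' (by rw [← hqt1, ← h, hpt1])
          · exact hsingne u' (by rw [← hqt2, ← h, hpt1])
          · exact hsingne u' (by rw [← hqt1, ← h, hpt2])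
          · exact hsingne u' (by rw [← hqt2, ← h, hpt2])
        · exfalso
          rcases hshare with h | h | h | h
          · exact hsingne u (by rw [← hpt1, h, hqt1])
          · exact hsingne u (by rw [← hpt1, h, hqt2])
          · exact hsingne u (by rw [← hpt2, h, hqt1])
          · exact hsingne u (by rw [← hpt2, h, hqt2])
        · -- both lifts
          have huu : u = u' := by
            rcases hshare with h | h | h | h
            · exact Finset.singleton_injective (by rw [← hpt1, h, hqt1])
            · exact Finset.singleton_injective (by rw [← hpt1, h, hqt2])
            · exact Finset.singleton_injective (by rw [← hpt2, h, hqt1])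
            · exact Finset.singleton_injective (by rw [← hpt2, h, hqt2])
          subst huu
          obtain ⟨hmat, -, -⟩ := hMu u hu
          have hab : a = b := by
            apply hmat.eq_of_shared a ha b hb
            rw [hpe, hqe] at hshare
            dsimp only at hshare
            rcases hshare with h | h | h | h
            · exact Or.inl (hinsinj u _ _ hua1 hub1 h)
            · exact Or.inr (Or.inl (hinsinj u _ _ hua1 hub2 h))
            · exact Or.inr (Or.inr (Or.inl (hinsinj u _ _ hua2 hub1 h)))
            · exact Or.inr (Or.inr (Or.inr (hinsinj u _ _ hua2 hub2 h)))
          rw [hpe, hqe, hab]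
    -- measure for the type-∅ zone
    set m : Finset V → ℕ := fun σ => (if v ∈ σ then 0 else 2) + σ.card with hmdef
    have hstepA : ∀ α β, matchStep (Xs G s) MM α β → typ β ⊆ typ α := by
      intro α β hstep
      rcases hstep.2.2 with h | hd
      · rcases hclass _ h with ⟨-, σ, -, -, -, -, ht1, ht2, -⟩ |
            ⟨u, -, -, q, -, -, ht1, ht2, -⟩
        · have e2 : typ β = ∅ := ht2
          rw [e2]
          exact Finset.empty_subset _
        · have e1 : typ α = {u} := ht1
          have e2 : typ β = {u} := ht2
          rw [e1, e2]
      · exact htyp_mono _ _ hd.1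
    have hTG1 : ∀ α β, Relation.TransGen (matchStep (Xs G s) MM) α β → typ β ⊆ typ α := by
      intro α β h
      induction h with
      | single h => exact hstepA _ _ h
      | tail h1 h2 ih => exact (hstepA _ _ h2).trans ih
    have hstepB : ∀ α β, matchStep (Xs G s) MM α β → typ α = ∅ → typ β = ∅ →
        m β < m α := by
      rintro α β ⟨hα, hβ, h | ⟨hsub, hcard, hnm⟩⟩ htα htβ
      · rcases hclass _ h with ⟨-, σ, hσ, hvσ, -, hpe, -⟩ | ⟨u, hu, -, q, -, -, ht1, -⟩
        · have e1 : α = σ := congrArg Prod.fst hpe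
          have e2 : β = insert v σ := congrArg Prod.snd hpe
          rw [hmdef]
          dsimp only
          rw [e1, e2, if_neg hvσ, if_pos (Finset.mem_insert_self v σ),
            Finset.card_insert_of_notMem hvσ]
          omega
        · exfalso
          have e1 : typ α = {u} := ht1
          rw [htα] at e1
          exact hsingne u e1.symm
      · rw [hmdef]
        dsimp only
        by_cases hvα : v ∈ α
        · have hvβ : v ∈ β := by
            by_contra hvβ
            have hβα : β = α.erase v := by
              apply Finset.eq_of_subset_of_card_le
              · intro z hz
                exact Finset.mem_erase.mpr ⟨fun he => hvβ (he ▸ hz), hsub hz⟩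
              · rw [Finset.card_erase_of_mem hvα]; omega
            apply hnm
            left
            refine ⟨α.erase v, hXsub α hα _ (Finset.erase_subset _ _),
              Finset.notMem_erase _ _,
              fun z hz => (htyp_empty_iff α).mp htα z (Finset.mem_of_mem_erase hz), ?_⟩
            rw [Prod.mk.injEq]
            exact ⟨hβα, (Finset.insert_erase hvα).symm⟩
          rw [if_pos hvα, if_pos hvβ]
          omega
        · have hvβ : v ∉ β := fun h => hvα (hsub h)
          rw [if_neg hvα, if_neg hvβ]
          omega
    have hTG2 : ∀ α β, Relation.TransGen (matchStep (Xs G s) MM) α β →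
        (typ α ⊆ typ β → typ α = ∅ → m β < m α) := by
      intro α β h
      induction h with
      | @single β' h =>
        intro hsub he
        have hβe : typ β' = ∅ := Finset.subset_empty.mp (he ▸ hstepA _ _ h)
        exact hstepB _ _ h he hβe
      | @tail γ β' h1 h2 ih =>
        intro hsub he
        have hγα : typ γ ⊆ typ α := hTG1 _ _ h1
        have hγe : typ γ = ∅ := Finset.subset_empty.mp (he ▸ hγα)
        have hβe : typ β' = ∅ := Finset.subset_empty.mp (hγe ▸ hstepA _ _ h2)
        exact lt_trans (hstepB _ _ h2 hγe hβe)
          (ih (by rw [he]; exact Finset.empty_subset _) he)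
    have hstepC : ∀ u, u ∈ Nv → ∀ α β, matchStep (Xs G s) MM α β → typ α = {u} →
        typ β = {u} → matchStep (Xs G (su u)) (Mu u) (α.erase u) (β.erase u) := by
      intro u hu α β hstep htα htβ
      obtain ⟨hα, hβ, h | ⟨hsub, hcard, hnm⟩⟩ := hstep
      · obtain ⟨huα, hαe⟩ := hF3a u hu α hα htα
        obtain ⟨huβ, hβe⟩ := hF3a u hu β hβ htβ
        refine ⟨hαe, hβe, ?_⟩
        rcases hclass _ h with ⟨-, σ, -, -, -, -, ht1, -⟩ |
            ⟨u', hu', -, q, hq, hpe, ht1, ht2, hq1, hq2, -⟩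
        · exfalso
          have e1 : typ α = ∅ := ht1
          rw [htα] at e1
          exact hsingne u e1
        · have huu : u' = u := by
            have e1 : typ α = {u'} := ht1
            rw [htα] at e1
            exact Finset.singleton_injective e1.symm
          rw [huu] at hq hq1 hq2 hpe
          left
          have e1 : α = insert u q.1 := congrArg Prod.fst hpe
          have e2 : β = insert u q.2 := congrArg Prod.snd hpe
          have e3 : (α.erase u, β.erase u) = q := by
            rw [Prod.mk.injEq, e1, e2, Finset.erase_insert hq1, Finset.erase_insert hq2]
            exact ⟨rfl, rfl⟩
          rw [e3]
          exact hq
      · obtain ⟨huα, hαe⟩ := hF3a u hu α hα htα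
        obtain ⟨huβ, hβe⟩ := hF3a u hu β hβ htβ
        refine ⟨hαe, hβe, Or.inr ⟨Finset.erase_subset_erase _ hsub, ?_, ?_⟩⟩
        · rw [Finset.card_erase_of_mem huα, Finset.card_erase_of_mem huβ]
          have h1 : 0 < α.card := Finset.card_pos.mpr ⟨u, huα⟩
          have h2 : 0 < β.card := Finset.card_pos.mpr ⟨u, huβ⟩
          omega
        · intro hmem
          apply hnm
          right
          exact ⟨u, hu, ⟨(β.erase u, α.erase u), hmem,
            by rw [Prod.mk.injEq]
               exact ⟨(Finset.insert_erase huβ).symm, (Finset.insert_erase huα).symm⟩⟩⟩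
    have hTG3 : ∀ u, u ∈ Nv → ∀ α β, Relation.TransGen (matchStep (Xs G s) MM) α β →
        (typ α ⊆ typ β → typ α = {u} →
          Relation.TransGen (matchStep (Xs G (su u)) (Mu u)) (α.erase u) (β.erase u)) := by
      intro u hu α β h
      induction h with
      | @single β' h =>
        intro hsub he
        have hβe : typ β' = {u} := Finset.Subset.antisymm
          (by rw [← he]; exact hstepA _ _ h) (by rw [← he]; exact hsub)
        exact Relation.TransGen.single (hstepC u hu _ _ h he hβe)
      | @tail γ β' h1 h2 ih =>
        intro hsub he
        have hγα : typ γ ⊆ typ α := hTG1 _ _ h1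
        have hβγ : typ β' ⊆ typ γ := hstepA _ _ h2
        have hαγ : typ α ⊆ typ γ := hsub.trans hβγ
        have hγe : typ γ = {u} := Finset.Subset.antisymm
          (by rw [← he]; exact hγα) (by rw [← he]; exact hαγ)
        have hβe : typ β' = {u} := Finset.Subset.antisymm
          (by rw [← he]; exact hβγ.trans hγα) (by rw [← he]; exact hsub)
        exact Relation.TransGen.tail (ih hαγ he) (hstepC u hu _ _ h2 hγe hβe)
    have hacyc : ∀ σ, ¬ Relation.TransGen (matchStep (Xs G s) MM) σ σ := by
      intro σ hcyc
      have hσX : σ ∈ Xs G s := by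
        cases hcyc with
        | single h => exact h.1
        | tail h1 h2 => exact h2.2.1
      by_cases hte : typ σ = ∅
      · exact absurd (hTG2 σ σ hcyc (Finset.Subset.refl _) hte) (lt_irrefl _)
      · obtain ⟨u, hu, htu⟩ := hF1 σ hσX hte
        exact (hMu u hu).2.1 _ (hTG3 u hu σ σ hcyc (Finset.Subset.refl _) htu)
    have hcrit : ∀ σ, IsCritical (Xs G s) MM σ → IsMaximalFace (Xs G s) σ := by
      rintro σ ⟨hσX, hcr⟩
      have hne : typ σ ≠ ∅ := by
        intro hte
        by_cases hvσ : v ∈ σ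
        · have hp : (σ.erase v, σ) ∈ MM := Or.inl ⟨σ.erase v,
            hXsub σ hσX _ (Finset.erase_subset _ _), Finset.notMem_erase _ _,
            fun z hz => (htyp_empty_iff σ).mp hte z (Finset.mem_of_mem_erase hz),
            by rw [Prod.mk.injEq]; exact ⟨rfl, (Finset.insert_erase hvσ).symm⟩⟩
          exact (hcr _ hp).2 rfl
        · have hp : (σ, insert v σ) ∈ MM :=
            Or.inl ⟨σ, hσX, hvσ, (htyp_empty_iff σ).mp hte, rfl⟩
          exact (hcr _ hp).1 rfl
      obtain ⟨u, hu, htu⟩ := hF1 σ hσX hne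
      obtain ⟨huσ, herase⟩ := hF3a u hu σ hσX htu
      obtain ⟨hmatu, hacycu, hcritu⟩ := hMu u hu
      have hcrit_u : IsCritical (Xs G (su u)) (Mu u) (σ.erase u) := by
        refine ⟨herase, ?_⟩
        intro p hp
        have hmm : (insert u p.1, insert u p.2) ∈ MM := Or.inr ⟨u, hu, p, hp, rfl⟩
        constructor
        · intro h1
          exact (hcr _ hmm).1 (show insert u p.1 = σ by
            rw [h1, Finset.insert_erase huσ])
        · intro h2
          exact (hcr _ hmm).2 (show insert u p.2 = σ by
            rw [h2, Finset.insert_erase huσ])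
      have hmax_u := hcritu _ hcrit_u
      refine ⟨hσX, ?_⟩
      intro ρ hρ hsubρ
      have huρ : u ∈ ρ := hsubρ huσ
      have htρ : typ ρ = {u} := by
        refine Finset.eq_singleton_iff_unique_mem.mpr
          ⟨(htyp_mem ρ u).mpr ⟨huρ, ((hNv_mem u).mp hu).2⟩, ?_⟩
        intro w hw
        obtain ⟨hwρ, hwadj⟩ := (htyp_mem ρ w).mp hw
        by_contra hwu
        exact hρ.2 u huρ w hwρ
          (hvsimp u (hρ.1 huρ) w (hρ.1 hwρ) ((hNv_mem u).mp hu).2 hwadj (Ne.symm hwu))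
      obtain ⟨huρ', herρ⟩ := hF3a u hu ρ hρ htρ
      have hee : σ.erase u = ρ.erase u :=
        hmax_u.2 _ herρ (Finset.erase_subset_erase _ hsubρ)
      calc σ = insert u (σ.erase u) := (Finset.insert_erase huσ).symm
        _ = insert u (ρ.erase u) := by rw [hee]
        _ = ρ := Finset.insert_erase huρ
    exact ⟨MM, hmatch, hacyc, hcrit⟩


end main

theorem stmt_11 {V : Type*} [Fintype V] [DecidableEq V] (G : SimpleGraph V)
    (hG : Chordal G) :
    ∃ M, IsAcyclicMatching (indepComplex G) M ∧ ExceptOneMaximal (indepComplex G) M := by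
  classical
  obtain ⟨M, hmatch, hacyc, hcrit⟩ :=
    goodMatching hG (Finset.univ : Finset V).card Finset.univ le_rfl
  have hXiff : ∀ σ : Finset V,
      σ ∈ indepComplex G ↔ (σ ∈ Xs G Finset.univ ∧ σ.Nonempty) := by
    intro σ
    constructor
    · rintro ⟨h1, -, h3⟩
      exact ⟨⟨Finset.subset_univ σ, h3⟩, h1⟩
    · rintro ⟨⟨-, h3⟩, h1⟩
      exact ⟨h1, fun x _ => Set.notMem_empty x, h3⟩
  set M' : Set (Finset V × Finset V) := {p | p ∈ M ∧ p.1 ≠ ∅} with hM'def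
  have hmaxX : ∀ σ, σ ∈ indepComplex G → IsMaximalFace (Xs G Finset.univ) σ →
      IsMaximalFace (indepComplex G) σ := by
    intro σ hσ hm
    exact ⟨hσ, fun τ hτ hsub => hm.2 τ ((hXiff τ).mp hτ).1 hsub⟩
  refine ⟨M', ⟨⟨?_, ?_, ?_, ?_, ?_⟩, ?_⟩, ?_, ?_⟩
  · intro p hp
    refine (hXiff p.1).mpr ⟨hmatch.left_mem p hp.1, Finset.nonempty_iff_ne_empty.mpr hp.2⟩
  · intro p hp
    refine (hXiff p.2).mpr ⟨hmatch.right_mem p hp.1, Finset.card_pos.mp ?_⟩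
    rw [hmatch.card_eq p hp.1]
    omega
  · exact fun p hp => hmatch.subset p hp.1
  · exact fun p hp => hmatch.card_eq p hp.1
  · exact fun p hp q hq h => hmatch.eq_of_shared p hp.1 q hq.1 h
  · -- acyclicity
    intro σ h
    apply hacyc σ
    refine Relation.TransGen.mono ?_ _ _ h
    rintro α β ⟨hXα, hXβ, hor⟩
    refine ⟨((hXiff α).mp hXα).1, ((hXiff β).mp hXβ).1, ?_⟩
    rcases hor with h' | ⟨h1, h2, h3⟩
    · exact Or.inl h'.1
    · refine Or.inr ⟨h1, h2, fun hc => h3 ⟨hc, ?_⟩⟩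
      exact Finset.nonempty_iff_ne_empty.mp ((hXiff β).mp hXβ).2
  all_goals {
    have hkey : ∀ σ, IsCritical (indepComplex G) M' σ →
        ¬ IsMaximalFace (indepComplex G) σ → ∃ p ∈ M, p.1 = ∅ ∧ p.2 = σ := by
      rintro σ ⟨hσ, hcr⟩ hnmax
      have hnc : ¬ IsCritical (Xs G Finset.univ) M σ := by
        intro hc
        exact hnmax (hmaxX σ hσ (hcrit σ hc))
      unfold IsCritical at hnc
      push_neg at hnc
      obtain ⟨p, hpM, hps⟩ := hnc ((hXiff σ).mp hσ).1
      by_cases h1 : p.1 = σ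
      · exfalso
        have hσne : σ ≠ ∅ := Finset.nonempty_iff_ne_empty.mp ((hXiff σ).mp hσ).2
        have hpM' : p ∈ M' := ⟨hpM, by rw [h1]; exact hσne⟩
        exact (hcr p hpM').1 h1
      · have h2 : p.2 = σ := hps h1
        have hp1 : p.1 = ∅ := by
          by_contra hne
          exact (hcr p ⟨hpM, hne⟩).2 h2
        exact ⟨p, hpM, hp1, h2⟩
    first
    | · intro σ hc hn
        obtain ⟨p, hpM, hp1, hp2⟩ := hkey σ hc hn
        have hce := hmatch.card_eq p hpM
        rw [hp1, hp2] at hce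
        simpa using hce
    | · intro σ τ hcσ hcτ hnσ hnτ
        obtain ⟨p, hpM, hp1, hp2⟩ := hkey σ hcσ hnσ
        obtain ⟨q, hqM, hq1, hq2⟩ := hkey τ hcτ hnτ
        have hpq : p = q := hmatch.eq_of_shared p hpM q hqM (Or.inl (by rw [hp1, hq1]))
        rw [← hp2, ← hq2, hpq]
  }
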